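/- For each n ∈ ℕ, let K_n be an infinite cyclic group generated by a_n, and let G = *_{n∈ℕ} K_n be the free product. For each m ∈ ℕ, let L_m be the cyclic subgroup of G generated by a_{2m}·a_{2m+1}, and let L be the subgroup of G generated by all the L_m. Then L is not finitely generated. -/

import Mathlib

private noncomputable def phi : FreeGroup ℕ →* Multiplicative (ℕ →₀ ℤ) :=
  FreeGroup.lift fun n =>
    Multiplicative.ofAdd (if n % 2 = 1 then Finsupp.single (n / 2) 1 else 0)

private lemma phi_gen (m : ℕ) :
    phi (FreeGroup.of (2 * m) * FreeGroup.of (2 * m + 1)) =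
      Multiplicative.ofAdd (Finsupp.single m (1 : ℤ)) := by
  have h1 : (2 * m) % 2 = 0 := by omega
  have h2 : (2 * m + 1) % 2 = 1 := by omega
  have h3 : (2 * m + 1) / 2 = m := by omega
  simp [phi, h1, h2, h3, ← ofAdd_add]

private lemma map_phi_top :
    Subgroup.map phi (Subgroup.closure
      {x : FreeGroup ℕ | ∃ m : ℕ, x = FreeGroup.of (2 * m) * FreeGroup.of (2 * m + 1)}) = ⊤ := by
  rw [MonoidHom.map_closure]
  rw [eq_top_iff]
  intro z _
  have key : ∀ g : ℕ →₀ ℤ, Multiplicative.ofAdd g ∈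
      Subgroup.closure (phi ''
        {x : FreeGroup ℕ | ∃ m : ℕ, x = FreeGroup.of (2 * m) * FreeGroup.of (2 * m + 1)}) := by
    intro g
    induction g using Finsupp.induction with
    | zero => simpa using one_mem _
    | single_add a b f _ _ ih =>
      have hsplit : Multiplicative.ofAdd (Finsupp.single a b + f) =
          Multiplicative.ofAdd (Finsupp.single a b) * Multiplicative.ofAdd f := rfl
      rw [hsplit]
      refine mul_mem ?_ ih
      have hgen : Multiplicative.ofAdd (Finsupp.single a (1 : ℤ)) ∈
          phi '' {x : FreeGroup ℕ | ∃ m : ℕ, x = FreeGroup.of (2 * m) * FreeGroup.of (2 * m + 1)} :=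
        ⟨FreeGroup.of (2 * a) * FreeGroup.of (2 * a + 1), ⟨a, rfl⟩, phi_gen a⟩
      have h : Multiplicative.ofAdd (Finsupp.single a b) =
          (Multiplicative.ofAdd (Finsupp.single a (1 : ℤ))) ^ b := by
        apply Multiplicative.toAdd.injective
        simp [toAdd_zpow]
      rw [h]
      exact zpow_mem (Subgroup.subset_closure hgen) b
  exact key (Multiplicative.toAdd z)


/-- Let `G = *_{n∈ℕ} ⟨a_n⟩` be the free product of countably many infinite cyclic
groups (i.e. the free group on `ℕ`), and let `L` be the subgroup generated by the
elements `a_{2m}·a_{2m+1}`, `m ∈ ℕ`. Then `L` is not finitely generated. -/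
theorem stmt7 :
    ¬ (Subgroup.closure
        {x : FreeGroup ℕ | ∃ m : ℕ, x = FreeGroup.of (2 * m) * FreeGroup.of (2 * m + 1)}).FG := by
  intro hFG
  obtain ⟨S, hS, hSfin⟩ := (Subgroup.fg_iff _).mp hFG
  -- the image subgroup is finitely generated
  have htop : Subgroup.closure (phi '' S) = (⊤ : Subgroup (Multiplicative (ℕ →₀ ℤ))) := by
    rw [← MonoidHom.map_closure, hS, map_phi_top]
  have hGfg : Group.FG (Multiplicative (ℕ →₀ ℤ)) :=
    Group.fg_iff.mpr ⟨phi '' S, htop, hSfin.image _⟩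
  have hAfg : AddGroup.FG (ℕ →₀ ℤ) := AddGroup.fg_iff_mul_fg.mpr hGfg
  have hfin : Module.Finite ℤ (ℕ →₀ ℤ) := Module.Finite.iff_addGroup_fg.mpr hAfg
  have hrank : Module.rank ℤ (ℕ →₀ ℤ) < Cardinal.aleph0 := Module.rank_lt_aleph0 ℤ _
  rw [rank_finsupp_self'] at hrank
  simp [Cardinal.mk_nat] at hrank
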